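/- Let p be a prime, k a commutative ring with p·1 = 0, and R = k[t_1, …, t_d] the polynomial ring in d ≥ 1 variables. Let A ⊆ R be the k-subalgebra generated by t_1^p, …, t_d^p, so that R is a finite free A-module of rank p^d. Then for every g ∈ R, the norm N_{R/A}(g) ∈ A (the determinant of the A-linear endomorphism of R given by multiplication by g), viewed as an element of R via the inclusion A ⊆ R, equals g^{p^d}. -/

import Mathlib

open MvPolynomial Finset

set_option maxHeartbeats 1000000
set_option synthInstance.maxHeartbeats 1000000

noncomputable section NormPowAux

variable {p d : ℕ} {k : Type*} [CommRing k]

variable (p d k) in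
def Aa : Subalgebra k (MvPolynomial (Fin d) k) :=
  Algebra.adjoin k (Set.range fun i : Fin d => (X i : MvPolynomial (Fin d) k) ^ p)

lemma dvd_of_mem_Aa {a : MvPolynomial (Fin d) k} (ha : a ∈ Aa p d k) :
    ∀ m ∈ a.support, ∀ i, p ∣ m i := by
  let S : Subalgebra k (MvPolynomial (Fin d) k) :=
    { carrier := {a | ∀ m ∈ a.support, ∀ i, p ∣ m i}
      mul_mem' := by
        intro x y hx hy m hm i
        have := MvPolynomial.support_mul x y hm
        rw [Finset.mem_add] at this
        obtain ⟨m1, hm1, m2, hm2, rfl⟩ := this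
        exact Dvd.dvd.add (hx m1 hm1 i) (hy m2 hm2 i)
      add_mem' := by
        intro x y hx hy m hm i
        have := MvPolynomial.support_add hm
        rw [Finset.mem_union] at this
        rcases this with h | h
        · exact hx m h i
        · exact hy m h i
      algebraMap_mem' := by
        intro c m hm i
        rw [MvPolynomial.mem_support_iff, MvPolynomial.algebraMap_eq, MvPolynomial.coeff_C] at hm
        have : m = 0 := by
          by_contra h
          simp [Ne.symm h] at hm
        subst this
        simp }
  have hle : Aa p d k ≤ S := by
    apply Algebra.adjoin_le
    rintro x ⟨i, rfl⟩ m hm j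
    dsimp only at hm
    rw [MvPolynomial.X_pow_eq_monomial] at hm
    have := MvPolynomial.support_monomial_subset hm
    simp only [Finset.mem_singleton] at this
    subst this
    rcases eq_or_ne j i with rfl | h
    · simp
    · simp [Finsupp.single_apply_eq_zero.mpr fun h' => absurd h' h]
  exact hle ha

lemma monomial_mem_Aa {m : Fin d →₀ ℕ} (hm : ∀ i, p ∣ m i) (c : k) :
    monomial m c ∈ Aa p d k := by
  have h1 : (monomial m (1:k)) = ∏ i ∈ m.support, (X i ^ p) ^ (m i / p) := by
    rw [← MvPolynomial.prod_X_pow_eq_monomial]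
    refine Finset.prod_congr rfl fun i _ => ?_
    rw [← pow_mul, Nat.mul_div_cancel' (hm i)]
  have h2 : monomial m c = C c * monomial m 1 := by
    rw [MvPolynomial.C_mul_monomial, mul_one]
  rw [h2, h1]
  have hC : C c ∈ Aa p d k := by
    have := (Aa p d k).algebraMap_mem c
    rwa [MvPolynomial.algebraMap_eq] at this
  exact mul_mem hC
    (prod_mem fun i _ => pow_mem (Algebra.subset_adjoin (Set.mem_range_self i)) _)

variable (p) in
def ee (e : Fin d → Fin p) : Fin d →₀ ℕ := Finsupp.equivFunOnFinite.symm fun i => (e i : ℕ)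

@[simp] lemma ee_apply (e : Fin d → Fin p) (i : Fin d) : ee p e i = e i := rfl

lemma Aa_smul (a : Aa p d k) (x : MvPolynomial (Fin d) k) :
    a • x = (a : MvPolynomial (Fin d) k) * x := by
  rw [Algebra.smul_def]; rfl

lemma li_Aa : LinearIndependent (Aa p d k)
    (fun e : Fin d → Fin p => (monomial (ee p e) (1:k))) := by
  rw [linearIndependent_iff]
  intro l hl
  refine Finsupp.ext fun e => ?_
  rw [Finsupp.linearCombination_apply, Finsupp.sum] at hl
  suffices hco : (l e : MvPolynomial (Fin d) k) = 0 by
    exact ZeroMemClass.coe_eq_zero.mp hco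
  have key : ∀ m' : Fin d →₀ ℕ, (∀ i, p ∣ m' i) →
      coeff m' (l e : MvPolynomial (Fin d) k) = 0 := by
    intro m' hm'
    have hc := congrArg (coeff (m' + ee p e)) hl
    rw [MvPolynomial.coeff_sum, MvPolynomial.coeff_zero] at hc
    rw [Finset.sum_eq_single e (fun e' _ hne => ?_)
      (fun h => by rw [Finsupp.notMem_support_iff.mp h, zero_smul, MvPolynomial.coeff_zero])] at hc
    · rw [Aa_smul, MvPolynomial.coeff_mul_monomial', if_pos le_add_self,
        add_tsub_cancel_right, mul_one] at hc
      exact hc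
    · rw [Aa_smul, MvPolynomial.coeff_mul_monomial']
      split_ifs with h
      · obtain ⟨i, hi⟩ := Function.ne_iff.mp hne
        rw [mul_one]
        by_contra hcne
        have hmem := MvPolynomial.mem_support_iff.mpr hcne
        have hdvd := dvd_of_mem_Aa (l e').2 _ hmem i
        have hle : (ee p e' : Fin d →₀ ℕ) i ≤ (m' + ee p e) i := (Finsupp.le_def.mp h) i
        rw [Finsupp.add_apply, ee_apply, ee_apply] at hle
        rw [Finsupp.tsub_apply, Finsupp.add_apply, ee_apply, ee_apply] at hdvd
        have heq : (m' i + (e i : ℕ) - (e' i : ℕ)) + (e' i : ℕ) = m' i + e i := by omega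
        have hmod : ((e' i : ℕ)) ≡ ((e i : ℕ)) [MOD p] := by
          have h0 := (Nat.ModEq.add_right (e' i : ℕ)
            ((Nat.modEq_zero_iff_dvd).mpr hdvd))
          rw [heq, zero_add] at h0
          have h2 := (Nat.ModEq.add_right (e i : ℕ)
            ((Nat.modEq_zero_iff_dvd).mpr (hm' i)))
          rw [zero_add] at h2
          exact h0.symm.trans h2
        have : (e' i : ℕ) = (e i : ℕ) := by
          have h1 := Nat.ModEq.eq_of_lt_of_lt hmod (e' i).isLt (e i).isLt
          exact h1
        exact hi (Fin.ext this)
      · rfl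
  refine MvPolynomial.ext _ _ fun m => ?_
  rw [MvPolynomial.coeff_zero]
  by_cases hall : ∀ i, p ∣ m i
  · exact key m hall
  · by_contra hc
    exact hall (dvd_of_mem_Aa (l e).2 m (MvPolynomial.mem_support_iff.mpr hc))

lemma sp_Aa (hp : 0 < p) : ⊤ ≤ Submodule.span (Aa p d k)
    (Set.range fun e : Fin d → Fin p => (monomial (ee p e) (1:k))) := by
  intro a _
  rw [← MvPolynomial.support_sum_monomial_coeff a]
  apply Submodule.sum_mem
  intro m _
  set r : Fin d → Fin p := fun i => ⟨m i % p, Nat.mod_lt _ hp⟩ with hr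
  have hle : ee p r ≤ m := Finsupp.le_def.mpr fun i => Nat.mod_le _ _
  have hdvd : ∀ i, p ∣ (m - ee p r) i := by
    intro i
    rw [Finsupp.tsub_apply]
    refine ⟨m i / p, ?_⟩
    have := Nat.div_add_mod (m i) p
    simp only [ee_apply, hr]
    omega
  have heq : monomial m (coeff m a) =
      (⟨monomial (m - ee p r) (coeff m a), monomial_mem_Aa hdvd _⟩ : Aa p d k) •
        monomial (ee p r) (1:k) := by
    rw [Aa_smul]
    simp only
    rw [MvPolynomial.monomial_mul, mul_one, tsub_add_cancel_of_le hle]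
  rw [heq]
  exact Submodule.smul_mem _ _ (Submodule.subset_span (Set.mem_range_self r))

variable (d k) in
def bb (hp : 0 < p) : Module.Basis (Fin d → Fin p) (Aa p d k) (MvPolynomial (Fin d) k) :=
  Module.Basis.mk li_Aa (sp_Aa hp)

lemma bb_apply (hp : 0 < p) (e : Fin d → Fin p) :
    bb d k hp e = monomial (ee p e) (1:k) := Module.Basis.mk_apply _ _ _

open TensorProduct in
abbrev Bt (p d : ℕ) (k : Type*) [CommRing k] : Type _ :=
  (MvPolynomial (Fin d) k) ⊗[Aa p d k] (MvPolynomial (Fin d) k)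

variable (p d k) in
noncomputable def eps (i : Fin d) : Bt p d k :=
  (1 : MvPolynomial (Fin d) k) ⊗ₜ (X i) - algebraMap (MvPolynomial (Fin d) k) (Bt p d k) (X i)

variable (p d k) in
noncomputable def EE (m : Fin d → ℕ) : Bt p d k := ∏ i, eps p d k i ^ m i

lemma tmul_of_mem_Aa {r : MvPolynomial (Fin d) k} (hr : r ∈ Aa p d k) :
    (1 : MvPolynomial (Fin d) k) ⊗ₜ[Aa p d k] r
      = algebraMap (MvPolynomial (Fin d) k) (Bt p d k) r := by
  have h1 : r = (⟨r, hr⟩ : Aa p d k) • (1 : MvPolynomial (Fin d) k) := by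
    rw [Aa_smul, mul_one]
  rw [Algebra.TensorProduct.algebraMap_apply, Algebra.algebraMap_self, RingHom.id_apply]
  conv_lhs => rw [h1]
  rw [← TensorProduct.smul_tmul, ← h1]

lemma charP_Bt [CharP k p] (hp : 0 < p) : CharP (Bt p d k) p := by
  have hinj : Function.Injective (algebraMap (MvPolynomial (Fin d) k) (Bt p d k)) := by
    intro x y hxy
    have := congrArg (Algebra.TensorProduct.lmul'' (S := MvPolynomial (Fin d) k) (Aa p d k)) hxy
    simpa [Algebra.TensorProduct.algebraMap_apply, Algebra.TensorProduct.lmul''] using this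
  exact charP_of_injective_ringHom hinj p

lemma eps_pow_p (hp : p.Prime) [CharP k p] (i : Fin d) : eps p d k i ^ p = 0 := by
  haveI := Fact.mk hp
  haveI := charP_Bt (d := d) (k := k) hp.pos
  haveI : ExpChar (Bt p d k) p := ExpChar.prime hp
  rw [eps, sub_pow_expChar ((1 : MvPolynomial (Fin d) k) ⊗ₜ[Aa p d k] (X i))
    (algebraMap (MvPolynomial (Fin d) k) (Bt p d k) (X i)),
    Algebra.TensorProduct.tmul_pow, one_pow, ← map_pow,
    tmul_of_mem_Aa (Algebra.subset_adjoin (Set.mem_range_self i)), sub_self]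

lemma EE_mul (m m' : Fin d → ℕ) : EE p d k m * EE p d k m' = EE p d k (m + m') := by
  rw [EE, EE, EE, ← Finset.prod_mul_distrib]
  exact Finset.prod_congr rfl fun i _ => by rw [← pow_add]; rfl

lemma EE_zero (m : Fin d → ℕ) : EE p d k 0 = 1 ∧ True := ⟨by simp [EE], trivial⟩

lemma EE_single (i : Fin d) : EE p d k (Pi.single i 1) = eps p d k i := by
  rw [EE, Finset.prod_eq_single i (fun j _ hj => by rw [Pi.single_eq_of_ne hj, pow_zero])
    (fun h => absurd (Finset.mem_univ i) h)]
  rw [Pi.single_eq_same, pow_one]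

lemma EE_eq_zero (hp : p.Prime) [CharP k p] {m : Fin d → ℕ} {i : Fin d} (hi : p ≤ m i) :
    EE p d k m = 0 := by
  rw [EE]
  apply Finset.prod_eq_zero (Finset.mem_univ i)
  rw [show m i = p + (m i - p) by omega, pow_add, eps_pow_p hp, zero_mul]

variable (p d k) in
noncomputable def c0 : (Fin d → Fin p) → Bt p d k := fun e => EE p d k fun i => (e i : ℕ)

lemma EE_mem_span (hp : p.Prime) [CharP k p] (m : Fin d → ℕ) :
    EE p d k m ∈ Submodule.span (MvPolynomial (Fin d) k) (Set.range (c0 p d k)) := by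
  by_cases h : ∀ i, m i < p
  · exact Submodule.subset_span ⟨fun i => ⟨m i, h i⟩, rfl⟩
  · push_neg at h
    obtain ⟨i, hi⟩ := h
    rw [EE_eq_zero hp hi]
    exact Submodule.zero_mem _

lemma span_c0_eq_top (hp : p.Prime) [CharP k p] :
    Submodule.span (MvPolynomial (Fin d) k) (Set.range (c0 p d k)) = ⊤ := by
  set T := Submodule.span (MvPolynomial (Fin d) k) (Set.range (c0 p d k)) with hT
  have heps : ∀ (i : Fin d), ∀ v ∈ T, eps p d k i * v ∈ T := by
    intro i v hv
    induction hv using Submodule.span_induction with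
    | mem x hx =>
        obtain ⟨e, rfl⟩ := hx
        show eps p d k i * EE p d k _ ∈ T
        rw [← EE_single i, EE_mul]
        exact EE_mem_span hp _
    | zero => rw [mul_zero]; exact Submodule.zero_mem _
    | add x y _ _ hx hy => rw [mul_add]; exact add_mem hx hy
    | smul r x _ hx => rw [mul_smul_comm]; exact Submodule.smul_mem _ _ hx
  have hone : (1 : Bt p d k) ∈ T := by
    have h0 : EE p d k 0 = 1 := by simp [EE]
    rw [← h0]; exact EE_mem_span hp 0
  have key : ∀ r : MvPolynomial (Fin d) k, (1 : MvPolynomial (Fin d) k) ⊗ₜ[Aa p d k] r ∈ T := by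
    intro r
    induction r using MvPolynomial.induction_on with
    | C a =>
        have hC : (C a : MvPolynomial (Fin d) k) ∈ Aa p d k := by
          have := (Aa p d k).algebraMap_mem a
          rwa [MvPolynomial.algebraMap_eq] at this
        rw [tmul_of_mem_Aa hC, ← mul_one (algebraMap _ _ _), ← Algebra.smul_def]
        exact Submodule.smul_mem _ _ hone
    | add f g hf hg => rw [TensorProduct.tmul_add]; exact add_mem hf hg
    | mul_X f i hf =>
        have h1 : (1 : MvPolynomial (Fin d) k) ⊗ₜ[Aa p d k] (f * X i)
            = (X i : MvPolynomial (Fin d) k) • ((1 : MvPolynomial (Fin d) k) ⊗ₜ[Aa p d k] f)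
              + eps p d k i * ((1 : MvPolynomial (Fin d) k) ⊗ₜ[Aa p d k] f) := by
          have hsm : (X i : MvPolynomial (Fin d) k) • ((1 : MvPolynomial (Fin d) k) ⊗ₜ[Aa p d k] f)
              = (X i : MvPolynomial (Fin d) k) ⊗ₜ[Aa p d k] f := by
            rw [TensorProduct.smul_tmul', smul_eq_mul, mul_one]
          have halg : algebraMap (MvPolynomial (Fin d) k) (Bt p d k) (X i)
              = (X i : MvPolynomial (Fin d) k) ⊗ₜ[Aa p d k] (1 : MvPolynomial (Fin d) k) := by
            rw [Algebra.TensorProduct.algebraMap_apply, Algebra.algebraMap_self, RingHom.id_apply]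
          rw [hsm, eps, halg,
            sub_mul ((1 : MvPolynomial (Fin d) k) ⊗ₜ[Aa p d k] (X i : MvPolynomial (Fin d) k))
              ((X i : MvPolynomial (Fin d) k) ⊗ₜ[Aa p d k] (1 : MvPolynomial (Fin d) k))
              ((1 : MvPolynomial (Fin d) k) ⊗ₜ[Aa p d k] f),
            Algebra.TensorProduct.tmul_mul_tmul, Algebra.TensorProduct.tmul_mul_tmul,
            one_mul, mul_one, one_mul, mul_comm (X i) f]
          abel
        rw [h1]
        exact add_mem (Submodule.smul_mem _ _ hf) (heps i _ hf)
  rw [eq_top_iff, ← Module.Basis.span_eq ((bb d k hp.pos).baseChange (MvPolynomial (Fin d) k))]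
  apply Submodule.span_le.mpr
  rintro _ ⟨e, rfl⟩
  rw [Module.Basis.baseChange_apply]
  exact key _

lemma constr_c0_surjective (hp : p.Prime) [CharP k p] :
    Function.Surjective
      (((bb d k hp.pos).baseChange (MvPolynomial (Fin d) k)).constr ℕ (c0 p d k)) := by
  rw [← LinearMap.range_eq_top, eq_top_iff, ← span_c0_eq_top (p := p) (d := d) (k := k) hp]
  apply Submodule.span_le.mpr
  rintro _ ⟨e, rfl⟩
  exact ⟨((bb d k hp.pos).baseChange (MvPolynomial (Fin d) k)) e, Module.Basis.constr_basis _ _ _ _⟩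

variable (p d k) in
noncomputable def cbas (hp : p.Prime) [CharP k p] :
    Module.Basis (Fin d → Fin p) (MvPolynomial (Fin d) k) (Bt p d k) :=
  letI := Module.Finite.of_basis ((bb d k hp.pos).baseChange (MvPolynomial (Fin d) k))
  ((bb d k hp.pos).baseChange (MvPolynomial (Fin d) k)).map
    (LinearEquiv.ofBijective _
      ⟨OrzechProperty.injective_of_surjective_endomorphism _ (constr_c0_surjective hp),
        constr_c0_surjective hp⟩)

lemma cbas_apply (hp : p.Prime) [CharP k p] (e : Fin d → Fin p) :
    cbas p d k hp e = c0 p d k e := by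
  rw [cbas, Module.Basis.map_apply]
  exact Module.Basis.constr_basis _ ℕ _ _

variable (p d k) in
noncomputable def Jw (w : ℕ) : Submodule (MvPolynomial (Fin d) k) (Bt p d k) :=
  Submodule.span _ (EE p d k '' {m | w ≤ ∑ i, m i})

lemma Jw_mono {w w' : ℕ} (h : w ≤ w') : Jw p d k w' ≤ Jw p d k w :=
  Submodule.span_mono (Set.image_mono fun m hm => le_trans h hm)

lemma EE_mem_Jw {m : Fin d → ℕ} {w : ℕ} (hw : w ≤ ∑ i, m i) : EE p d k m ∈ Jw p d k w :=
  Submodule.subset_span ⟨m, hw, rfl⟩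

lemma mul_EE_mem_Jw {v : Bt p d k} {w : ℕ} (hv : v ∈ Jw p d k w) (m : Fin d → ℕ) :
    v * EE p d k m ∈ Jw p d k (w + ∑ i, m i) := by
  induction hv using Submodule.span_induction with
  | mem x hx =>
      obtain ⟨m', hm', rfl⟩ := hx
      rw [EE_mul]
      refine EE_mem_Jw ?_
      have : ∑ i, (m' + m) i = (∑ i, m' i) + ∑ i, m i := by
        simp [Finset.sum_add_distrib]
      rw [this]
      exact Nat.add_le_add_right hm' _
  | zero => rw [zero_mul]; exact Submodule.zero_mem _
  | add x y _ _ hx hy => rw [add_mul]; exact add_mem hx hy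
  | smul r x _ hx => rw [smul_mul_assoc]; exact Submodule.smul_mem _ _ hx

lemma smul_Bt (r : MvPolynomial (Fin d) k) (v : Bt p d k) :
    r • v = algebraMap (MvPolynomial (Fin d) k) (Bt p d k) r * v := Algebra.smul_def r v

lemma sum_single_one (i : Fin d) : (∑ j, (Pi.single i 1 : Fin d → ℕ) j) = 1 := by
  simp [Pi.single_apply]

lemma sub_tmul_mem_J1 (r : MvPolynomial (Fin d) k) :
    (1 : MvPolynomial (Fin d) k) ⊗ₜ[Aa p d k] r
      - algebraMap (MvPolynomial (Fin d) k) (Bt p d k) r ∈ Jw p d k 1 := by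
  induction r using MvPolynomial.induction_on with
  | C a =>
      have hC : (C a : MvPolynomial (Fin d) k) ∈ Aa p d k := by
        have := (Aa p d k).algebraMap_mem a
        rwa [MvPolynomial.algebraMap_eq] at this
      rw [tmul_of_mem_Aa hC, sub_self]
      exact Submodule.zero_mem _
  | add f g hf hg =>
      have : (1 : MvPolynomial (Fin d) k) ⊗ₜ[Aa p d k] (f + g)
          - algebraMap (MvPolynomial (Fin d) k) (Bt p d k) (f + g)
          = ((1 : MvPolynomial (Fin d) k) ⊗ₜ[Aa p d k] f
              - algebraMap (MvPolynomial (Fin d) k) (Bt p d k) f)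
            + ((1 : MvPolynomial (Fin d) k) ⊗ₜ[Aa p d k] g
              - algebraMap (MvPolynomial (Fin d) k) (Bt p d k) g) := by
        rw [TensorProduct.tmul_add, map_add]
        abel
      rw [this]
      exact add_mem hf hg
  | mul_X f i hf =>
      have heps1 : eps p d k i ∈ Jw p d k 1 := by
        rw [← EE_single i]
        exact EE_mem_Jw (by rw [sum_single_one])
      have h1 : (1 : MvPolynomial (Fin d) k) ⊗ₜ[Aa p d k] (f * X i)
          = ((1 : MvPolynomial (Fin d) k) ⊗ₜ[Aa p d k] f)
            * ((1 : MvPolynomial (Fin d) k) ⊗ₜ[Aa p d k] (X i)) := by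
        rw [Algebra.TensorProduct.tmul_mul_tmul, one_mul]
      have hdec : (1 : MvPolynomial (Fin d) k) ⊗ₜ[Aa p d k] (f * X i)
          - algebraMap (MvPolynomial (Fin d) k) (Bt p d k) (f * X i)
          = algebraMap (MvPolynomial (Fin d) k) (Bt p d k) f * eps p d k i
            + algebraMap (MvPolynomial (Fin d) k) (Bt p d k) (X i)
              * ((1 : MvPolynomial (Fin d) k) ⊗ₜ[Aa p d k] f
                  - algebraMap (MvPolynomial (Fin d) k) (Bt p d k) f)
            + ((1 : MvPolynomial (Fin d) k) ⊗ₜ[Aa p d k] f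
                  - algebraMap (MvPolynomial (Fin d) k) (Bt p d k) f) * eps p d k i := by
        rw [h1, map_mul, eps]
        ring
      rw [hdec]
      refine add_mem (add_mem ?_ ?_) ?_
      · rw [← smul_Bt f (eps p d k i)]
        exact Submodule.smul_mem _ _ heps1
      · rw [← smul_Bt (X i) _]
        exact Submodule.smul_mem _ _ hf
      · have h2 := mul_EE_mem_Jw hf (Pi.single i 1)
        rw [EE_single, sum_single_one] at h2
        exact Jw_mono (by norm_num) h2

lemma repr_eq_zero_of_mem_Jw (hp : p.Prime) [CharP k p] {v : Bt p d k} {w : ℕ}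
    (hv : v ∈ Jw p d k w) (f : Fin d → Fin p) (hf : (∑ i, (f i : ℕ)) < w) :
    (cbas p d k hp).repr v f = 0 := by
  classical
  induction hv using Submodule.span_induction with
  | mem x hx =>
      obtain ⟨m, hm, rfl⟩ := hx
      by_cases hlt : ∀ i, m i < p
      · have hc : EE p d k m = cbas p d k hp (fun i => ⟨m i, hlt i⟩) := by
          rw [cbas_apply]; rfl
        rw [hc, Module.Basis.repr_self, Finsupp.single_apply, if_neg]
        intro heq
        rw [← heq] at hf
        have hf' : (∑ i, m i) < w := hf
        have hm' : w ≤ ∑ i, m i := hm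
        omega
      · push_neg at hlt
        obtain ⟨i, hi⟩ := hlt
        rw [EE_eq_zero hp hi, map_zero, Finsupp.coe_zero, Pi.zero_apply]
  | zero => rw [map_zero, Finsupp.coe_zero, Pi.zero_apply]
  | add x y _ _ hx hy => rw [map_add, Finsupp.add_apply, hx, hy, add_zero]
  | smul r x _ hx => rw [map_smul, Finsupp.smul_apply, hx, smul_zero]

theorem main_charP (hp : p.Prime) [CharP k p] (g : MvPolynomial (Fin d) k) :
    algebraMap (Aa p d k) (MvPolynomial (Fin d) k) (Algebra.norm (Aa p d k) g)
      = g ^ (p ^ d) := by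
  classical
  haveI : Module.Free (Aa p d k) (MvPolynomial (Fin d) k) := Module.Free.of_basis (bb d k hp.pos)
  haveI : Module.Finite (Aa p d k) (MvPolynomial (Fin d) k) :=
    Module.Finite.of_basis (bb d k hp.pos)
  rw [Algebra.norm_apply, ← LinearMap.det_baseChange]
  have hcomm : LinearMap.baseChange (MvPolynomial (Fin d) k)
        ((Algebra.lmul (Aa p d k) (MvPolynomial (Fin d) k)) g)
      = (Algebra.lmul (MvPolynomial (Fin d) k) (Bt p d k))
          ((1 : MvPolynomial (Fin d) k) ⊗ₜ[Aa p d k] g) := by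
    apply LinearMap.ext
    intro z
    induction z using TensorProduct.induction_on with
    | zero => rw [map_zero, map_zero]
    | tmul r x =>
        rw [LinearMap.baseChange_tmul, Algebra.coe_lmul_eq_mul, Algebra.coe_lmul_eq_mul,
          LinearMap.mul_apply', LinearMap.mul_apply', Algebra.TensorProduct.tmul_mul_tmul,
          one_mul, mul_comm g x]
    | add x y hx hy => rw [map_add, map_add, hx, hy]
  rw [hcomm, ← LinearMap.det_toMatrix (cbas p d k hp)]
  set h : Bt p d k := (1 : MvPolynomial (Fin d) k) ⊗ₜ[Aa p d k] g with hh
  set M := LinearMap.toMatrix (cbas p d k hp) (cbas p d k hp)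
    ((Algebra.lmul (MvPolynomial (Fin d) k) (Bt p d k)) h) with hM
  set wt : (Fin d → Fin p) → ℕ := fun e => ∑ i, (e i : ℕ) with hwt
  -- entry analysis
  have hentry : ∀ e f, M e f
      = g * (Finsupp.single f (1 : MvPolynomial (Fin d) k)) e
        + (cbas p d k hp).repr ((h - algebraMap _ (Bt p d k) g) * cbas p d k hp f) e := by
    intro e f
    rw [hM, LinearMap.toMatrix_apply, Algebra.coe_lmul_eq_mul, LinearMap.mul_apply']
    have hsplit : h * cbas p d k hp f
        = g • cbas p d k hp f
          + (h - algebraMap _ (Bt p d k) g) * cbas p d k hp f := by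
      rw [smul_Bt]
      ring
    rw [hsplit, map_add, Finsupp.add_apply, map_smul, Finsupp.smul_apply, Module.Basis.repr_self,
      smul_eq_mul]
  have hmemf : ∀ f, (h - algebraMap _ (Bt p d k) g) * cbas p d k hp f ∈ Jw p d k (1 + wt f) := by
    intro f
    have h1 : h - algebraMap _ (Bt p d k) g ∈ Jw p d k 1 := sub_tmul_mem_J1 g
    have h2 := mul_EE_mem_Jw h1 (fun i => (f i : ℕ))
    have hc : cbas p d k hp f = EE p d k (fun i => (f i : ℕ)) := by rw [cbas_apply]; rfl
    rw [hc]
    exact h2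
  have hdiag : ∀ e, M e e = g := by
    intro e
    rw [hentry e e, Finsupp.single_apply, if_pos rfl, mul_one,
      repr_eq_zero_of_mem_Jw hp (hmemf e) e (by simp only [hwt]; omega), add_zero]
  have hoff : ∀ e f, e ≠ f → wt e ≤ wt f → M e f = 0 := by
    intro e f hne hle
    rw [hentry e f, Finsupp.single_apply, if_neg (fun hh' => hne hh'.symm), mul_zero,
      repr_eq_zero_of_mem_Jw hp (hmemf f) e
        (by simp only [hwt] at hle ⊢; omega), add_zero]
  -- determinant
  rw [← Matrix.det_transpose]
  have hbt : M.transpose.BlockTriangular wt := by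
    intro e f hlt
    exact hoff f e (fun hh' => absurd hh' (by rintro rfl; exact lt_irrefl _ hlt)) hlt.le
  rw [hbt.det]
  have hblock : ∀ a ∈ Finset.univ.image wt,
      (M.transpose.toSquareBlock wt a).det
        = g ^ (Finset.univ.filter (fun e => wt e = a)).card := by
    intro a _
    have hbl : M.transpose.toSquareBlock wt a = Matrix.diagonal (fun _ => g) := by
      refine Matrix.ext fun e f => ?_
      rw [Matrix.toSquareBlock_def]
      by_cases hef : e = f
      · subst hef
        rw [Matrix.diagonal_apply_eq, Matrix.of_apply, Matrix.transpose_apply, hdiag]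
      · rw [Matrix.diagonal_apply_ne _ hef, Matrix.of_apply, Matrix.transpose_apply]
        have hne : (f : Fin d → Fin p) ≠ (e : Fin d → Fin p) :=
          fun hh' => hef (Subtype.ext hh'.symm)
        exact hoff _ _ hne (by rw [f.2, e.2])
    rw [hbl, Matrix.det_diagonal, Finset.prod_const, Finset.card_univ, Fintype.card_subtype]
  rw [Finset.prod_congr rfl hblock, Finset.prod_pow_eq_pow_sum]
  congr 1
  rw [← Finset.card_eq_sum_card_fiberwise
    (fun x _ => Finset.mem_image_of_mem wt (Finset.mem_univ x))]
  rw [Finset.card_univ]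
  simp [Fintype.card_fun]

end NormPowAux

/-- In characteristic `p`, for `R = k[t_1,…,t_d]` and `A = k[t_1^p,…,t_d^p] ⊆ R` (so that
`R` is finite free of rank `p^d` over `A`), the norm of any `g ∈ R` over `A` — the
determinant of multiplication by `g` on `R` as an `A`-module — equals `g^{p^d}` in `R`. -/
theorem norm_eq_pow_p_pow_d (p : ℕ) (hp : p.Prime)
    (k : Type*) [CommRing k] (hchar : (p : k) = 0) (d : ℕ) (hd : 1 ≤ d)
    (g : MvPolynomial (Fin d) k) :
    ((Algebra.norm
        (Algebra.adjoin k (Set.range fun i : Fin d => (X i : MvPolynomial (Fin d) k) ^ p))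
        g : _) : MvPolynomial (Fin d) k) = g ^ (p ^ d) := by
  rcases subsingleton_or_nontrivial k with hk | hk
  · apply Subsingleton.elim
  · have hchar' : CharP k p := by
      have hdvd : ringChar k ∣ p := ringChar.dvd hchar
      rcases Nat.Prime.eq_one_or_self_of_dvd hp _ hdvd with h1 | h1
      · exact absurd h1 CharP.ringChar_ne_one
      · rw [← h1]; exact ringChar.charP k
    haveI := hchar'
    exact main_charP hp g
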